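/- (Abhyankar formula, general form) With F, H as above (F_i = x_i − H_i, H_i of order ≥ 2, j(F) = 1), for every U ∈ K[[x_1,...,x_n]] one has U = Σ_{p ∈ ℕ^n} ∂^p( U(F) · H^p ) / p!. -/

import Mathlib

set_option linter.unusedSectionVars false


/-!
STATEMENT 7 (Abhyankar formula, general form): With `Fᵢ = xᵢ − Hᵢ`, `Hᵢ` of
order ≥ 2 and `j(F) = 1`, every `U ∈ K[[x₁,…,xₙ]]` satisfies
`U = Σ_{p∈ℕⁿ} ∂^p ( U(F) · H^p ) / p!`.
-/

open MvPowerSeries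

noncomputable section

variable {K : Type*} [Field K] [CharZero K] {n : ℕ}

def dgF {n : ℕ} (μ : Fin n →₀ ℕ) : ℕ := μ.sum fun _ e => e

/-- the partial derivative `∂_a` of a multivariate power series -/
def pd (a : Fin n) (f : MvPowerSeries (Fin n) K) : MvPowerSeries (Fin n) K :=
  fun ν => ((ν a + 1 : ℕ) : K) * MvPowerSeries.coeff (ν + Finsupp.single a 1) f

/-- the iterated partial derivative `∂^j` -/
def Dmulti (j : Fin n → ℕ) (b : MvPowerSeries (Fin n) K) : MvPowerSeries (Fin n) K :=
  fun ν => (∏ i, (((ν i + j i).factorial / (ν i).factorial : ℕ) : K)) *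
    MvPowerSeries.coeff (ν + Finsupp.equivFunOnFinite.symm j) b

/-- substitution `f ↦ f(u₁,…,uₙ)` for `uᵢ` with zero constant term -/
def substF (u : Fin n → MvPowerSeries (Fin n) K) (f : MvPowerSeries (Fin n) K) :
    MvPowerSeries (Fin n) K :=
  fun μ => ∑ᶠ (p : Fin n → ℕ),
    MvPowerSeries.coeff (Finsupp.equivFunOnFinite.symm p) f *
      MvPowerSeries.coeff μ (∏ i, (u i) ^ (p i))

namespace Abhy

lemma dgF_eq_sum (μ : Fin n →₀ ℕ) : dgF μ = ∑ a, μ a := by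
  rw [dgF, Finsupp.sum_fintype]; intro; rfl

lemma dgF_add (μ ν : Fin n →₀ ℕ) : dgF (μ + ν) = dgF μ + dgF ν := by
  simp [dgF_eq_sum, Finset.sum_add_distrib]

lemma coord_le_dgF (μ : Fin n →₀ ℕ) (a : Fin n) : μ a ≤ dgF μ := by
  rw [dgF_eq_sum]
  exact Finset.single_le_sum (fun i _ => Nat.zero_le _) (Finset.mem_univ a)

lemma dgF_zero : dgF (0 : Fin n →₀ ℕ) = 0 := by simp [dgF_eq_sum]

lemma dgF_eq_zero_iff (μ : Fin n →₀ ℕ) : dgF μ = 0 ↔ μ = 0 := by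
  constructor
  · intro h; ext a
    have := coord_le_dgF μ a
    simp only [Finsupp.coe_zero, Pi.zero_apply]
    omega
  · rintro rfl; exact dgF_zero

lemma dgF_single (b : Fin n) : dgF (Finsupp.single b 1) = 1 := by
  rw [dgF, Finsupp.sum_single_index]; rfl

lemma add_sub_single (μ : Fin n →₀ ℕ) (b : Fin n) :
    μ + Finsupp.single b 1 - Finsupp.single b 1 = μ := by
  ext a; simp [Finsupp.tsub_apply]

lemma sub_add_single (μ : Fin n →₀ ℕ) (b : Fin n) (h : μ b ≠ 0) :
    μ - Finsupp.single b 1 + Finsupp.single b 1 = μ := by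
  ext a
  rcases eq_or_ne a b with rfl | hab
  · simp [Finsupp.tsub_apply]; omega
  · simp [Finsupp.tsub_apply, Finsupp.single_apply, Ne.symm hab]

lemma sub_single_add (μ ν : Fin n →₀ ℕ) (b : Fin n) (h : μ b ≠ 0) :
    μ - Finsupp.single b 1 + ν = μ + ν - Finsupp.single b 1 := by
  ext a
  rcases eq_or_ne a b with rfl | hab
  · simp [Finsupp.tsub_apply]; omega
  · simp [Finsupp.tsub_apply, Finsupp.single_apply, Ne.symm hab]

lemma dgF_sub_single (μ : Fin n →₀ ℕ) (b : Fin n) (h : μ b ≠ 0) :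
    dgF (μ - Finsupp.single b 1) = dgF μ - 1 := by
  have h2 := dgF_add (μ - Finsupp.single b 1) (Finsupp.single b 1)
  rw [sub_add_single μ b h] at h2
  rw [dgF_single] at h2
  omega

/-- the finset of all multi-indices of total degree at most `N` -/
def bnd (N : ℕ) : Finset (Fin n →₀ ℕ) :=
  (Finset.Iic (Finsupp.equivFunOnFinite.symm fun _ => N)).filter fun ν => dgF ν ≤ N

lemma mem_bnd {N : ℕ} {ν : Fin n →₀ ℕ} : ν ∈ bnd N ↔ dgF ν ≤ N := by
  simp only [bnd, Finset.mem_filter, Finset.mem_Iic, and_iff_right_iff_imp]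
  intro h
  rw [Finsupp.le_def]
  intro a
  have := coord_le_dgF ν a
  have h1 : (Finsupp.equivFunOnFinite.symm fun _ => N) a = N := rfl
  rw [h1]
  omega

lemma bnd_mono {N M : ℕ} (h : N ≤ M) : (bnd N : Finset (Fin n →₀ ℕ)) ⊆ bnd M := by
  intro ν hν
  rw [mem_bnd] at *
  omega

lemma bnd_zero_mem {ν : Fin n →₀ ℕ} : ν ∈ bnd 0 ↔ ν = 0 := by
  rw [mem_bnd, Nat.le_zero, dgF_eq_zero_iff]

-- Appended into namespace Abhy context (tested standalone with p1 contents)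
section OrdGe

/-- `f` has order at least `k`. -/
def ordGe (f : MvPowerSeries (Fin n) K) (k : ℕ) : Prop :=
  ∀ ν : Fin n →₀ ℕ, dgF ν < k → MvPowerSeries.coeff ν f = 0

lemma ordGe_zero (f : MvPowerSeries (Fin n) K) : ordGe f 0 :=
  fun _ h => absurd h (Nat.not_lt_zero _)

lemma ordGe_mul {f g : MvPowerSeries (Fin n) K} {a b : ℕ}
    (hf : ordGe f a) (hg : ordGe g b) : ordGe (f * g) (a + b) := by
  intro ν hν
  classical
  rw [MvPowerSeries.coeff_mul]
  apply Finset.sum_eq_zero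
  rintro ⟨x, y⟩ hxy
  rw [Finset.HasAntidiagonal.mem_antidiagonal] at hxy
  have hsum : dgF x + dgF y = dgF ν := by rw [← dgF_add, hxy]
  rcases lt_or_ge (dgF x) a with h | h
  · simp [hf x h]
  · have : dgF y < b := by omega
    simp [hg y this]

lemma ordGe_pow {f : MvPowerSeries (Fin n) K} {a : ℕ} (hf : ordGe f a) (m : ℕ) :
    ordGe (f ^ m) (m * a) := by
  induction m with
  | zero => simpa using ordGe_zero (1 : MvPowerSeries (Fin n) K)
  | succ m ih =>
      have h1 : (m + 1) * a = m * a + a := by ring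
      rw [pow_succ, h1]
      exact ordGe_mul ih hf

lemma ordGe_prod {ι : Type*} (s : Finset ι) (f : ι → MvPowerSeries (Fin n) K) (k : ι → ℕ)
    (h : ∀ i ∈ s, ordGe (f i) (k i)) :
    ordGe (∏ i ∈ s, f i) (∑ i ∈ s, k i) := by
  classical
  induction s using Finset.induction_on with
  | empty => simpa using ordGe_zero (1 : MvPowerSeries (Fin n) K)
  | insert _ _ hx ih =>
      rw [Finset.prod_insert hx, Finset.sum_insert hx]
      exact ordGe_mul (h _ (Finset.mem_insert_self _ _))
        (ih fun i hi => h i (Finset.mem_insert_of_mem hi))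

end OrdGe

section PD

lemma coeff_pd (a : Fin n) (f : MvPowerSeries (Fin n) K) (ν : Fin n →₀ ℕ) :
    MvPowerSeries.coeff ν (pd a f)
      = ((ν a + 1 : ℕ) : K) * MvPowerSeries.coeff (ν + Finsupp.single a 1) f := rfl

lemma pd_add (a : Fin n) (f g : MvPowerSeries (Fin n) K) :
    pd a (f + g) = pd a f + pd a g := by
  ext ν
  simp [coeff_pd, map_add, mul_add]

lemma pd_zero (a : Fin n) : pd a (0 : MvPowerSeries (Fin n) K) = 0 := by
  ext ν; simp [coeff_pd]

lemma pd_neg (a : Fin n) (f : MvPowerSeries (Fin n) K) : pd a (-f) = -pd a f := by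
  ext ν; simp [coeff_pd]

lemma pd_sub (a : Fin n) (f g : MvPowerSeries (Fin n) K) :
    pd a (f - g) = pd a f - pd a g := by
  ext ν; simp [coeff_pd, map_sub, mul_sub]

lemma pd_zsmul (a : Fin n) (z : ℤ) (f : MvPowerSeries (Fin n) K) :
    pd a (z • f) = z • pd a f := by
  ext ν
  rw [map_zsmul, coeff_pd, coeff_pd, map_zsmul, mul_smul_comm]

lemma pd_sum {ι : Type*} (a : Fin n) (s : Finset ι) (f : ι → MvPowerSeries (Fin n) K) :
    pd a (∑ i ∈ s, f i) = ∑ i ∈ s, pd a (f i) := by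
  classical
  induction s using Finset.induction_on with
  | empty => simp [pd_zero]
  | insert _ _ hx ih => rw [Finset.sum_insert hx, Finset.sum_insert hx, pd_add, ih]

lemma mem_ad_sub {y1 y2 ν : Fin n →₀ ℕ} {k : Fin n}
    (h : y1 + y2 = ν + Finsupp.single k 1) (hk : y1 k ≠ 0) :
    y1 - Finsupp.single k 1 + y2 = ν := by
  rw [sub_single_add _ _ _ hk, h, add_sub_single]

lemma sum_ad_fst (ν : Fin n →₀ ℕ) (k : Fin n) (F : (Fin n →₀ ℕ) → (Fin n →₀ ℕ) → K) :
    ∑ y ∈ Finset.HasAntidiagonal.antidiagonal (ν + Finsupp.single k 1),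
        (((y.1 : Fin n →₀ ℕ) k : ℕ) : K) * F y.1 y.2
      = ∑ x ∈ Finset.HasAntidiagonal.antidiagonal ν, ((x.1 k + 1 : ℕ) : K) * F (x.1 + Finsupp.single k 1) x.2 := by
  classical
  have hfil : ∀ y ∈ Finset.HasAntidiagonal.antidiagonal (ν + Finsupp.single k 1),
      (((y.1 : Fin n →₀ ℕ) k : ℕ) : K) * F y.1 y.2 ≠ 0 → (y.1 : Fin n →₀ ℕ) k ≠ 0 := by
    intro y hy hne h0
    rw [h0, Nat.cast_zero, zero_mul] at hne
    exact hne rfl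
  rw [← Finset.sum_filter_of_ne hfil]
  refine Finset.sum_nbij'
    (i := fun y : (Fin n →₀ ℕ) × (Fin n →₀ ℕ) => (y.1 - Finsupp.single k 1, y.2))
    (j := fun x : (Fin n →₀ ℕ) × (Fin n →₀ ℕ) => (x.1 + Finsupp.single k 1, x.2)) ?_ ?_ ?_ ?_ ?_
  · rintro ⟨y1, y2⟩ hy
    rw [Finset.mem_filter, Finset.HasAntidiagonal.mem_antidiagonal] at hy
    rw [Finset.HasAntidiagonal.mem_antidiagonal]
    exact mem_ad_sub hy.1 hy.2
  · rintro ⟨x1, x2⟩ hx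
    rw [Finset.HasAntidiagonal.mem_antidiagonal] at hx
    rw [Finset.mem_filter, Finset.HasAntidiagonal.mem_antidiagonal]
    constructor
    · rw [add_right_comm, hx]
    · simp
  · rintro ⟨y1, y2⟩ hy
    rw [Finset.mem_filter] at hy
    have : y1 - Finsupp.single k 1 + Finsupp.single k 1 = y1 := sub_add_single _ _ hy.2
    simp only [Prod.mk.injEq]
    exact ⟨this, trivial⟩
  · rintro ⟨x1, x2⟩ _
    have : x1 + Finsupp.single k 1 - Finsupp.single k 1 = x1 := add_sub_single _ _
    simp only [Prod.mk.injEq]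
    exact ⟨this, trivial⟩
  · rintro ⟨y1, y2⟩ hy
    rw [Finset.mem_filter] at hy
    have hk1 : y1 k ≠ 0 := hy.2
    have h1 : ((y1 - Finsupp.single k 1 : Fin n →₀ ℕ) : Fin n → ℕ) k + 1 = y1 k := by
      rw [Finsupp.tsub_apply, Finsupp.single_apply, if_pos rfl]
      omega
    dsimp only
    rw [h1, sub_add_single _ _ hy.2]

lemma sum_ad_swap (m : Fin n →₀ ℕ) (G : (Fin n →₀ ℕ) → (Fin n →₀ ℕ) → K) :
    ∑ y ∈ Finset.HasAntidiagonal.antidiagonal m, G y.1 y.2 = ∑ y ∈ Finset.HasAntidiagonal.antidiagonal m, G y.2 y.1 := by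
  refine Finset.sum_nbij' Prod.swap Prod.swap ?_ ?_ ?_ ?_ ?_
  · rintro ⟨a, b⟩ h
    rw [Finset.HasAntidiagonal.mem_antidiagonal] at *
    rw [add_comm]; exact h
  · rintro ⟨a, b⟩ h
    rw [Finset.HasAntidiagonal.mem_antidiagonal] at *
    rw [add_comm]; exact h
  · rintro ⟨a, b⟩ _; rfl
  · rintro ⟨a, b⟩ _; rfl
  · rintro ⟨a, b⟩ _; rfl

lemma sum_ad_snd (ν : Fin n →₀ ℕ) (k : Fin n) (F : (Fin n →₀ ℕ) → (Fin n →₀ ℕ) → K) :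
    ∑ y ∈ Finset.HasAntidiagonal.antidiagonal (ν + Finsupp.single k 1),
        (((y.2 : Fin n →₀ ℕ) k : ℕ) : K) * F y.1 y.2
      = ∑ x ∈ Finset.HasAntidiagonal.antidiagonal ν, ((x.2 k + 1 : ℕ) : K) * F x.1 (x.2 + Finsupp.single k 1) := by
  rw [sum_ad_swap _ (fun α β : Fin n →₀ ℕ => ((β k : ℕ) : K) * F α β)]
  rw [sum_ad_fst ν k (fun α β : Fin n →₀ ℕ => F β α)]
  rw [sum_ad_swap ν (fun α β : Fin n →₀ ℕ => ((α k + 1 : ℕ) : K) * F β (α + Finsupp.single k 1))]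

lemma pd_mul (k : Fin n) (f g : MvPowerSeries (Fin n) K) :
    pd k (f * g) = pd k f * g + f * pd k g := by
  classical
  ext ν
  rw [map_add, coeff_pd, MvPowerSeries.coeff_mul, MvPowerSeries.coeff_mul,
    MvPowerSeries.coeff_mul, Finset.mul_sum]
  have step : ∀ y ∈ Finset.HasAntidiagonal.antidiagonal (ν + Finsupp.single k 1),
      ((ν k + 1 : ℕ) : K) * (MvPowerSeries.coeff y.1 f * MvPowerSeries.coeff y.2 g)
        = (y.1 k : K) * (MvPowerSeries.coeff y.1 f * MvPowerSeries.coeff y.2 g)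
          + (y.2 k : K) * (MvPowerSeries.coeff y.1 f * MvPowerSeries.coeff y.2 g) := by
    rintro ⟨y1, y2⟩ hy
    rw [Finset.HasAntidiagonal.mem_antidiagonal] at hy
    have : y1 k + y2 k = ν k + 1 := by
      have := congrArg (fun m : Fin n →₀ ℕ => m k) hy
      simpa [Finsupp.add_apply, Finsupp.single_apply] using this
    rw [← add_mul]
    congr 1
    rw [← Nat.cast_add, this]
  rw [Finset.sum_congr rfl step, Finset.sum_add_distrib]
  congr 1
  · rw [sum_ad_fst ν k (fun α β => MvPowerSeries.coeff α f * MvPowerSeries.coeff β g)]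
    apply Finset.sum_congr rfl
    rintro ⟨x1, x2⟩ _
    rw [coeff_pd, mul_assoc]
  · rw [sum_ad_snd ν k (fun α β => MvPowerSeries.coeff α f * MvPowerSeries.coeff β g)]
    apply Finset.sum_congr rfl
    rintro ⟨x1, x2⟩ _
    rw [coeff_pd]
    ring

lemma pd_one (a : Fin n) : pd a (1 : MvPowerSeries (Fin n) K) = 0 := by
  ext ν
  rw [coeff_pd, MvPowerSeries.coeff_one, if_neg, mul_zero, map_zero]
  intro h
  have := congrArg (fun m : Fin n →₀ ℕ => m a) h
  simp [Finsupp.add_apply, Finsupp.single_apply] at this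

lemma pd_pow_succ (k : Fin n) (f : MvPowerSeries (Fin n) K) (m : ℕ) :
    pd k (f ^ (m + 1)) = (m + 1) • (pd k f * f ^ m) := by
  induction m with
  | zero => simp
  | succ m ih =>
      rw [pow_succ, pd_mul, ih, smul_mul_assoc, succ_nsmul, mul_assoc, ← pow_succ,
        mul_comm (f ^ (m + 1)) (pd k f), succ_nsmul, succ_nsmul]

lemma pd_comm (a b : Fin n) (f : MvPowerSeries (Fin n) K) :
    pd a (pd b f) = pd b (pd a f) := by
  ext ν
  rw [coeff_pd, coeff_pd, coeff_pd, coeff_pd]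
  rw [add_right_comm ν (Finsupp.single b 1) (Finsupp.single a 1)]
  rcases eq_or_ne a b with rfl | hab
  · ring
  · simp only [Finsupp.add_apply, Finsupp.single_apply, if_neg hab, if_neg (Ne.symm hab)]
    ring

lemma pd_X (k b : Fin n) :
    pd k (MvPowerSeries.X b : MvPowerSeries (Fin n) K)
      = if k = b then 1 else 0 := by
  ext ν
  rw [coeff_pd, MvPowerSeries.coeff_X]
  rcases eq_or_ne k b with rfl | hkb
  · rw [if_pos rfl]
    rcases eq_or_ne ν 0 with rfl | hν
    · simp [MvPowerSeries.coeff_one]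
    · rw [if_neg, MvPowerSeries.coeff_one, if_neg hν, mul_zero]
      intro h
      apply hν
      have h2 : ν + Finsupp.single k 1 = 0 + Finsupp.single k 1 := by rw [h, zero_add]
      exact add_right_cancel h2
  · rw [if_neg hkb]
    rw [if_neg, mul_zero, map_zero]
    intro h
    have := congrArg (fun m : Fin n →₀ ℕ => m k) h
    simp [Finsupp.add_apply, Finsupp.single_apply, hkb, Ne.symm hkb] at this

lemma coeff_X_mul (b : Fin n) (A : MvPowerSeries (Fin n) K) (ν : Fin n →₀ ℕ) :
    MvPowerSeries.coeff ν (MvPowerSeries.X b * A)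
      = if Finsupp.single b 1 ≤ ν then MvPowerSeries.coeff (ν - Finsupp.single b 1) A
        else 0 := by
  rw [MvPowerSeries.X_def, MvPowerSeries.coeff_monomial_mul]
  split <;> simp

end PD

section Binom

lemma nat_B2 (a b : ℕ) : (a + b + 1) * (a + b).choose b = (a + 1) * (a + b + 1).choose b := by
  have h1 : (a + b).choose b = (a + b).choose a := by
    rw [← Nat.choose_symm (by omega : b ≤ a + b)]; congr 1; omega
  have h2 := Nat.add_one_mul_choose_eq (a + b) a
  have h3 : (a + b + 1).choose b = (a + b + 1).choose (a + 1) := by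
    rw [← Nat.choose_symm (by omega : b ≤ a + b + 1)]; congr 1; omega
  rw [h1, h2, h3]; ring

lemma nat_B3 (a b : ℕ) :
    (b + 1) * (a + (b + 1)).choose (b + 1) = (a + 1) * (a + 1 + b).choose b := by
  have h1 := Nat.add_one_mul_choose_eq (a + b) b
  have h2 : a + (b + 1) = a + b + 1 := by omega
  have h3 : a + 1 + b = a + b + 1 := by omega
  rw [h2, h3, ← nat_B2 a b, h1]
  ring

lemma nat_pascal (a b : ℕ) :
    (a + 1 + (b + 1)).choose (b + 1) = (a + (b + 1)).choose (b + 1) + (a + 1 + b).choose b := by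
  have h : a + 1 + (b + 1) = (a + b + 1) + 1 := by omega
  have h2 : a + (b + 1) = a + b + 1 := by omega
  have h3 : a + 1 + b = a + b + 1 := by omega
  rw [h, h2, h3, Nat.choose_succ_succ]
  ring

end Binom

/-- each `H i` has order at least 2 -/
def GoodH (H : Fin n → MvPowerSeries (Fin n) K) : Prop :=
  ∀ i (μ : Fin n →₀ ℕ), dgF μ < 2 → MvPowerSeries.coeff μ (H i) = 0

section CoordLemmas

lemma coord_sub_ne {μ : Fin n →₀ ℕ} {a b : Fin n} (hab : a ≠ b) :
    ((μ - Finsupp.single b 1 : Fin n →₀ ℕ) : Fin n → ℕ) a = μ a := by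
  rw [Finsupp.tsub_apply, Finsupp.single_apply, if_neg (Ne.symm hab), Nat.sub_zero]

lemma coord_add_ne {μ : Fin n →₀ ℕ} {a b : Fin n} (hab : a ≠ b) :
    ((μ + Finsupp.single b 1 : Fin n →₀ ℕ) : Fin n → ℕ) a = μ a := by
  rw [Finsupp.add_apply, Finsupp.single_apply, if_neg (Ne.symm hab), add_zero]

lemma coord_add_same (μ : Fin n →₀ ℕ) (b : Fin n) :
    ((μ + Finsupp.single b 1 : Fin n →₀ ℕ) : Fin n → ℕ) b = μ b + 1 := by
  rw [Finsupp.add_apply, Finsupp.single_apply, if_pos rfl]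

lemma coord_sub_same (μ : Fin n →₀ ℕ) (b : Fin n) :
    ((μ - Finsupp.single b 1 : Fin n →₀ ℕ) : Fin n → ℕ) b = μ b - 1 := by
  rw [Finsupp.tsub_apply, Finsupp.single_apply, if_pos rfl]

end CoordLemmas

section Series

variable (H : Fin n → MvPowerSeries (Fin n) K)

/-- `H^p` -/
def Hp (p : Fin n →₀ ℕ) : MvPowerSeries (Fin n) K := ∏ a, H a ^ p a

/-- `F_b = X_b - H_b` -/
def Fs (b : Fin n) : MvPowerSeries (Fin n) K := MvPowerSeries.X b - H b

/-- `F^m` -/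
def Fm (m : Fin n →₀ ℕ) : MvPowerSeries (Fin n) K := ∏ a, Fs H a ^ m a

/-- product of binomial coefficients -/
def bK (μ p : Fin n →₀ ℕ) : K := ∏ a, ((μ a + p a).choose (p a) : K)

/-- the operator `V ↦ ∑_p ∂^p (V H^p)/p!`, coefficientwise -/
def TT (V : MvPowerSeries (Fin n) K) : MvPowerSeries (Fin n) K :=
  fun μ => ∑ p ∈ bnd (dgF μ), bK μ p * MvPowerSeries.coeff (μ + p) (V * Hp H p)

lemma coeff_TT (V : MvPowerSeries (Fin n) K) (μ : Fin n →₀ ℕ) :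
    MvPowerSeries.coeff μ (TT H V)
      = ∑ p ∈ bnd (dgF μ), bK μ p * MvPowerSeries.coeff (μ + p) (V * Hp H p) := rfl

lemma prodPow_add_single (G : Fin n → MvPowerSeries (Fin n) K) (p : Fin n →₀ ℕ) (b : Fin n) :
    ∏ a, G a ^ (((p + Finsupp.single b 1 : Fin n →₀ ℕ) : Fin n → ℕ) a) = G b * ∏ a, G a ^ p a := by
  rw [← Finset.mul_prod_erase Finset.univ _ (Finset.mem_univ b),
      ← Finset.mul_prod_erase Finset.univ (fun a => G a ^ p a) (Finset.mem_univ b)]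
  rw [coord_add_same, pow_succ', mul_assoc]
  congr 1
  congr 1
  apply Finset.prod_congr rfl
  intro a ha
  have hab : a ≠ b := (Finset.mem_erase.mp ha).1
  rw [coord_add_ne hab]

lemma Hp_zero : Hp H 0 = 1 := by simp [Hp]

lemma Fm_zero : Fm H 0 = 1 := by simp [Fm]

lemma Hp_add_single (p : Fin n →₀ ℕ) (b : Fin n) :
    Hp H (p + Finsupp.single b 1) = H b * Hp H p := prodPow_add_single H p b

lemma Hp_sub_single (p : Fin n →₀ ℕ) (b : Fin n) (h : p b ≠ 0) :
    Hp H p = H b * Hp H (p - Finsupp.single b 1) := by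
  conv_lhs => rw [← sub_add_single p b h]
  exact Hp_add_single H _ b

lemma Fm_sub_single (m : Fin n →₀ ℕ) (i : Fin n) (h : m i ≠ 0) :
    Fm H m = Fs H i * Fm H (m - Finsupp.single i 1) := by
  conv_lhs => rw [← sub_add_single m i h]
  exact prodPow_add_single (Fs H) _ i

lemma ordGe_Hp (hH : GoodH H) (p : Fin n →₀ ℕ) : ordGe (Hp H p) (2 * dgF p) := by
  have h := ordGe_prod Finset.univ (fun a => H a ^ p a) (fun a => p a * 2)
    (fun a _ => ordGe_pow (hH a) (p a))
  have h2 : ∑ a, p a * 2 = 2 * dgF p := by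
    rw [dgF_eq_sum, ← Finset.sum_mul]
    ring
  rw [h2] at h
  exact h

lemma ordGe_Fs (hH : GoodH H) (b : Fin n) : ordGe (Fs H b) 1 := by
  intro ν hν
  have hν0 : ν = 0 := by
    rw [← dgF_eq_zero_iff]
    omega
  subst hν0
  rw [Fs, map_sub, MvPowerSeries.coeff_X, if_neg, hH b 0 (by rw [dgF_zero]; omega), sub_zero]
  exact fun h => one_ne_zero (Finsupp.single_eq_zero.mp h.symm)

lemma ordGe_Fm (hH : GoodH H) (m : Fin n →₀ ℕ) : ordGe (Fm H m) (dgF m) := by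
  have h := ordGe_prod Finset.univ (fun a => Fs H a ^ m a) (fun a => m a * 1)
    (fun a _ => ordGe_pow (ordGe_Fs H hH a) (m a))
  have h2 : ∑ a, m a * 1 = dgF m := by
    rw [dgF_eq_sum]
    simp
  rw [h2] at h
  exact h

lemma vanishW (hH : GoodH H) {W : MvPowerSeries (Fin n) K} {s : ℕ} (hW : ordGe W s)
    (ν p : Fin n →₀ ℕ) (h : dgF ν < s + 2 * dgF p) :
    MvPowerSeries.coeff ν (W * Hp H p) = 0 :=
  ordGe_mul hW (ordGe_Hp H hH p) ν h

lemma vanish0 (hH : GoodH H) (W : MvPowerSeries (Fin n) K) (ν p : Fin n →₀ ℕ) (h : dgF ν < 2 * dgF p) :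
    MvPowerSeries.coeff ν (W * Hp H p) = 0 :=
  vanishW H hH (ordGe_zero W) ν p (by omega)

lemma TT_apply (hH : GoodH H) (V : MvPowerSeries (Fin n) K) (μ : Fin n →₀ ℕ) (N : ℕ) (hN : dgF μ ≤ N) :
    MvPowerSeries.coeff μ (TT H V)
      = ∑ p ∈ bnd N, bK μ p * MvPowerSeries.coeff (μ + p) (V * Hp H p) := by
  rw [coeff_TT]
  apply Finset.sum_subset (bnd_mono hN)
  intro p _ hp
  rw [mem_bnd] at hp
  rw [vanish0 H hH V _ p ?_, mul_zero]
  rw [dgF_add]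
  omega

lemma TT_zero : TT H 0 = 0 := by
  ext μ
  rw [coeff_TT, map_zero]
  apply Finset.sum_eq_zero
  intro p _
  rw [zero_mul, map_zero, mul_zero]

lemma TT_add (V W : MvPowerSeries (Fin n) K) : TT H (V + W) = TT H V + TT H W := by
  ext μ
  rw [map_add, coeff_TT, coeff_TT, coeff_TT, ← Finset.sum_add_distrib]
  apply Finset.sum_congr rfl
  intro p _
  rw [add_mul, map_add, mul_add]

lemma TT_neg (V : MvPowerSeries (Fin n) K) : TT H (-V) = -TT H V := by
  ext μ
  rw [map_neg, coeff_TT, coeff_TT, ← Finset.sum_neg_distrib]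
  apply Finset.sum_congr rfl
  intro p _
  rw [neg_mul, map_neg, mul_neg]

lemma TT_sub (V W : MvPowerSeries (Fin n) K) : TT H (V - W) = TT H V - TT H W := by
  rw [sub_eq_add_neg, TT_add, TT_neg, sub_eq_add_neg]

lemma TT_sum {ι : Type*} (s : Finset ι) (V : ι → MvPowerSeries (Fin n) K) :
    TT H (∑ i ∈ s, V i) = ∑ i ∈ s, TT H (V i) := by
  classical
  induction s using Finset.induction_on with
  | empty => simpa using TT_zero H
  | insert _ _ hx ih => rw [Finset.sum_insert hx, Finset.sum_insert hx, TT_add, ih]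

end Series

section BKLemmas

lemma rest_congr (μ' p' μ p : Fin n →₀ ℕ) (b : Fin n)
    (h : ∀ a, a ≠ b → μ' a = μ a ∧ p' a = p a) :
    ∏ a ∈ Finset.univ.erase b, ((μ' a + p' a).choose (p' a) : K)
      = ∏ a ∈ Finset.univ.erase b, ((μ a + p a).choose (p a) : K) := by
  apply Finset.prod_congr rfl
  intro a ha
  rw [(h a (Finset.mem_erase.mp ha).1).1, (h a (Finset.mem_erase.mp ha).1).2]

lemma bK_factor (μ p : Fin n →₀ ℕ) (b : Fin n) :
    bK (K := K) μ p
      = ((μ b + p b).choose (p b) : K) * ∏ a ∈ Finset.univ.erase b, ((μ a + p a).choose (p a) : K) :=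
  (Finset.mul_prod_erase _ _ (Finset.mem_univ b)).symm

lemma bK_B2 (μ p : Fin n →₀ ℕ) (k : Fin n) :
    bK (K := K) μ p * ((μ k + p k + 1 : ℕ) : K)
      = ((μ k + 1 : ℕ) : K) * bK (K := K) (μ + Finsupp.single k 1) p := by
  rw [bK_factor (K := K) μ p k, bK_factor (K := K) (μ + Finsupp.single k 1) p k,
    rest_congr (μ + Finsupp.single k 1) p μ p k (fun a hab => ⟨coord_add_ne hab, rfl⟩),
    coord_add_same]
  have h := nat_B2 (μ k) (p k)
  have harg : μ k + p k + 1 = μ k + 1 + p k := by omega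
  rw [harg] at h
  have hK := congrArg (fun t : ℕ => (t : K)) h
  push_cast at hK
  push_cast
  linear_combination (∏ a ∈ Finset.univ.erase k, ((μ a + p a).choose (p a) : K)) * hK

lemma bK_B3 (μ q : Fin n →₀ ℕ) (j : Fin n) :
    bK (K := K) μ (q + Finsupp.single j 1) * ((q j + 1 : ℕ) : K)
      = ((μ j + 1 : ℕ) : K) * bK (K := K) (μ + Finsupp.single j 1) q := by
  rw [bK_factor (K := K) μ _ j, bK_factor (K := K) (μ + Finsupp.single j 1) q j,
    rest_congr μ (q + Finsupp.single j 1) μ q j (fun a hab => ⟨rfl, coord_add_ne hab⟩),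
    rest_congr (μ + Finsupp.single j 1) q μ q j (fun a hab => ⟨coord_add_ne hab, rfl⟩),
    coord_add_same, coord_add_same]
  have h := nat_B3 (μ j) (q j)
  have hK := congrArg (fun t : ℕ => (t : K)) h
  push_cast at hK
  push_cast
  linear_combination (∏ a ∈ Finset.univ.erase j, ((μ a + q a).choose (q a) : K)) * hK

lemma bK_pascal (μ p : Fin n →₀ ℕ) (b : Fin n) (hμ : μ b ≠ 0) (hp : p b ≠ 0) :
    bK (K := K) μ p
      = bK (K := K) μ (p - Finsupp.single b 1) + bK (K := K) (μ - Finsupp.single b 1) p := by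
  rw [bK_factor (K := K) μ p b, bK_factor (K := K) μ (p - Finsupp.single b 1) b,
    bK_factor (K := K) (μ - Finsupp.single b 1) p b,
    rest_congr μ (p - Finsupp.single b 1) μ p b (fun a hab => ⟨rfl, coord_sub_ne hab⟩),
    rest_congr (μ - Finsupp.single b 1) p μ p b (fun a hab => ⟨coord_sub_ne hab, rfl⟩),
    coord_sub_same, coord_sub_same, ← add_mul]
  congr 1
  obtain ⟨c, hc⟩ := Nat.exists_eq_succ_of_ne_zero hp
  obtain ⟨d, hd⟩ := Nat.exists_eq_succ_of_ne_zero hμ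
  rw [hc, hd, Nat.succ_sub_one, Nat.succ_sub_one, ← Nat.cast_add]
  congr 1
  simp only [Nat.succ_eq_add_one]
  rw [nat_pascal d c]
  exact Nat.add_comm _ _

lemma bK_mu_zero (μ p : Fin n →₀ ℕ) (b : Fin n) (hμ : μ b = 0) (hp : p b ≠ 0) :
    bK (K := K) μ p = bK (K := K) μ (p - Finsupp.single b 1) := by
  rw [bK_factor (K := K) μ p b, bK_factor (K := K) μ (p - Finsupp.single b 1) b,
    rest_congr μ (p - Finsupp.single b 1) μ p b (fun a hab => ⟨rfl, coord_sub_ne hab⟩),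
    coord_sub_same, hμ]
  simp [Nat.choose_self]

lemma bK_p_zero (μ p : Fin n →₀ ℕ) (b : Fin n) (hp : p b = 0) :
    bK (K := K) μ p = bK (K := K) (μ - Finsupp.single b 1) p := by
  rw [bK_factor (K := K) μ p b, bK_factor (K := K) (μ - Finsupp.single b 1) p b,
    rest_congr (μ - Finsupp.single b 1) p μ p b (fun a hab => ⟨coord_sub_ne hab, rfl⟩),
    coord_sub_same, hp]
  simp

lemma bK_zero_right (μ : Fin n →₀ ℕ) : bK (K := K) μ 0 = 1 := by
  unfold bK
  simp

lemma bK_zero_left (p : Fin n →₀ ℕ) : bK (K := K) 0 p = 1 := by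
  unfold bK
  simp [Nat.choose_self]

end BKLemmas

section Shift

lemma sum_bnd_shift (D : ℕ) (b : Fin n) (f : (Fin n →₀ ℕ) → K) :
    ∑ p ∈ bnd D, f (p + Finsupp.single b 1)
      = ∑ q ∈ (bnd (D + 1)).filter (fun q : Fin n →₀ ℕ => q b ≠ 0), f q := by
  refine Finset.sum_nbij' (i := fun p => p + Finsupp.single b 1)
    (j := fun q => q - Finsupp.single b 1) ?_ ?_ ?_ ?_ ?_
  · intro p hp
    rw [mem_bnd] at hp
    rw [Finset.mem_filter, mem_bnd, dgF_add, dgF_single, coord_add_same]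
    constructor
    · omega
    · omega
  · intro q hq
    rw [Finset.mem_filter, mem_bnd] at hq
    rw [mem_bnd, dgF_sub_single _ _ hq.2]
    omega
  · intro p _
    exact add_sub_single p b
  · intro q hq
    rw [Finset.mem_filter] at hq
    exact sub_add_single _ _ hq.2
  · intro p _
    rfl

end Shift

section TTFmul

variable (H : Fin n → MvPowerSeries (Fin n) K)

lemma TT_Fmul (hH : GoodH H) (b : Fin n) (V : MvPowerSeries (Fin n) K) :
    TT H (Fs H b * V) = MvPowerSeries.X b * TT H V := by
  ext μ
  rw [coeff_X_mul, TT_apply H hH _ μ (dgF μ + 1) (by omega)]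
  have e1 : (∑ p ∈ bnd (dgF μ + 1), bK μ p
        * MvPowerSeries.coeff (μ + p) ((Fs H b * V) * Hp H p))
      = (∑ p ∈ bnd (dgF μ + 1), bK μ p
          * (if Finsupp.single b 1 ≤ μ + p
              then MvPowerSeries.coeff (μ + p - Finsupp.single b 1) (V * Hp H p) else 0))
        - ∑ p ∈ bnd (dgF μ + 1), bK μ p
            * MvPowerSeries.coeff (μ + p) (V * Hp H (p + Finsupp.single b 1)) := by
    rw [← Finset.sum_sub_distrib]
    apply Finset.sum_congr rfl
    intro p _
    have hr : (Fs H b * V) * Hp H p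
        = MvPowerSeries.X b * (V * Hp H p) - V * Hp H (p + Finsupp.single b 1) := by
      rw [Hp_add_single, Fs]; ring
    rw [hr, map_sub, coeff_X_mul, mul_sub]
  rw [e1]
  have e2a : ∑ p ∈ bnd (dgF μ + 1), bK μ p
        * MvPowerSeries.coeff (μ + p) (V * Hp H (p + Finsupp.single b 1))
      = ∑ p ∈ bnd (dgF μ), bK μ p
          * MvPowerSeries.coeff (μ + p) (V * Hp H (p + Finsupp.single b 1)) := by
    symm
    apply Finset.sum_subset (bnd_mono (by omega))
    intro p hp hnp
    rw [mem_bnd] at hnp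
    rw [vanish0 H hH V _ _ ?_, mul_zero]
    rw [dgF_add, dgF_add, dgF_single]
    omega
  have e2b : ∑ p ∈ bnd (dgF μ), bK μ p
        * MvPowerSeries.coeff (μ + p) (V * Hp H (p + Finsupp.single b 1))
      = ∑ p ∈ bnd (dgF μ),
          (fun q => bK μ (q - Finsupp.single b 1)
            * MvPowerSeries.coeff (μ + q - Finsupp.single b 1) (V * Hp H q))
          (p + Finsupp.single b 1) := by
    apply Finset.sum_congr rfl
    intro p _
    dsimp only
    rw [add_sub_single, ← add_assoc, add_sub_single]
  rw [e2a, e2b, sum_bnd_shift (dgF μ) b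
    (fun q => bK μ (q - Finsupp.single b 1)
      * MvPowerSeries.coeff (μ + q - Finsupp.single b 1) (V * Hp H q)),
    Finset.sum_filter]
  by_cases hμ : Finsupp.single b 1 ≤ μ
  · have hb : μ b ≠ 0 := by
      rw [Finsupp.single_le_iff] at hμ
      omega
    rw [if_pos hμ, TT_apply H hH V (μ - Finsupp.single b 1) (dgF μ + 1)
      (by rw [dgF_sub_single _ _ hb]; omega)]
    rw [sub_eq_iff_eq_add, ← Finset.sum_add_distrib]
    apply Finset.sum_congr rfl
    intro p _
    have hg : Finsupp.single b 1 ≤ μ + p := le_trans hμ le_self_add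
    rw [if_pos hg, sub_single_add μ p b hb]
    by_cases hpb : p b = 0
    · rw [if_neg (not_not_intro hpb), add_zero, ← bK_p_zero μ p b hpb]
    · rw [if_pos hpb, bK_pascal μ p b hb hpb]
      ring
  · have hb : μ b = 0 := by
      rw [Finsupp.single_le_iff] at hμ
      omega
    rw [if_neg hμ, sub_eq_zero]
    apply Finset.sum_congr rfl
    intro p _
    by_cases hpb : p b = 0
    · rw [if_neg (not_not_intro hpb), if_neg, mul_zero]
      rw [Finsupp.single_le_iff, Finsupp.add_apply, hb, hpb]
      omega
    · rw [if_pos hpb, if_pos, ← bK_mu_zero μ p b hb hpb]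
      rw [Finsupp.single_le_iff, Finsupp.add_apply, hb]
      omega

end TTFmul

section PDProd

lemma pd_prod {ι : Type*} [DecidableEq ι] (k : Fin n) (s : Finset ι) (f : ι → MvPowerSeries (Fin n) K) :
    pd k (∏ i ∈ s, f i) = ∑ i ∈ s, pd k (f i) * ∏ j ∈ s.erase i, f j := by
  classical
  induction s using Finset.induction_on with
  | empty => simp [pd_one]
  | @insert x s hx ih =>
      rw [Finset.prod_insert hx, pd_mul, ih, Finset.sum_insert hx, Finset.mul_sum,
        Finset.erase_insert hx]
      congr 1
      apply Finset.sum_congr rfl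
      intro i hi
      have hix : i ≠ x := by rintro rfl; exact hx hi
      rw [Finset.erase_insert_of_ne hix.symm, Finset.prod_insert (fun h => hx (Finset.mem_of_mem_erase h))]
      ring

variable (H : Fin n → MvPowerSeries (Fin n) K)

lemma Hp_erase (p : Fin n →₀ ℕ) (j : Fin n) (h : p j ≠ 0) :
    Hp H (p - Finsupp.single j 1)
      = H j ^ (p j - 1) * ∏ a ∈ Finset.univ.erase j, H a ^ p a := by
  rw [Hp, ← Finset.mul_prod_erase Finset.univ _ (Finset.mem_univ j), coord_sub_same]
  congr 1
  apply Finset.prod_congr rfl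
  intro a ha
  rw [coord_sub_ne (Finset.mem_erase.mp ha).1]

lemma pd_Hp (k : Fin n) (p : Fin n →₀ ℕ) :
    pd k (Hp H p)
      = ∑ j, (p j) • (pd k (H j) * Hp H (p - Finsupp.single j 1)) := by
  rw [Hp, pd_prod]
  apply Finset.sum_congr rfl
  intro j _
  rcases Nat.eq_zero_or_pos (p j) with h0 | hpos
  · rw [h0, pow_zero, pd_one, zero_mul, zero_smul]
  · have h : p j ≠ 0 := by omega
    obtain ⟨m, hm⟩ : ∃ m, p j = m + 1 := ⟨p j - 1, by omega⟩
    rw [Hp_erase H p j h, hm, pd_pow_succ, smul_mul_assoc]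
    congr 1
    rw [Nat.add_sub_cancel, mul_assoc]

lemma ordGe_pdH (hH : GoodH H) (k j : Fin n) : ordGe (pd k (H j)) 1 := by
  intro ν hν
  have hν0 : ν = 0 := by rw [← dgF_eq_zero_iff]; omega
  subst hν0
  rw [coeff_pd, hH j _ (by rw [zero_add, dgF_single]; omega), mul_zero]

end PDProd

section TTpd

variable (H : Fin n → MvPowerSeries (Fin n) K)

lemma TT_pd (hH : GoodH H) (k : Fin n) (V : MvPowerSeries (Fin n) K) :
    TT H (pd k V)
      = pd k (TT H V) - ∑ j, pd j (TT H (pd k (H j) * V)) := by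
  ext μ
  rw [map_sub, TT_apply H hH _ μ (dgF μ + 1) (by omega)]
  have hsum : ∀ p ∈ bnd (dgF μ + 1),
      bK μ p * MvPowerSeries.coeff (μ + p) (pd k V * Hp H p)
        = ((μ k + 1 : ℕ) : K)
            * (bK (μ + Finsupp.single k 1) p
              * MvPowerSeries.coeff (μ + Finsupp.single k 1 + p) (V * Hp H p))
          - ∑ j, (p j : K)
              * (bK μ p * MvPowerSeries.coeff (μ + p)
                  ((pd k (H j) * V) * Hp H (p - Finsupp.single j 1))) := by
    intro p _
    have h1 : pd k V * Hp H p = pd k (V * Hp H p) - V * pd k (Hp H p) := by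
      rw [pd_mul]; ring
    rw [h1, map_sub, mul_sub]
    congr 1
    · rw [coeff_pd, Finsupp.add_apply, add_right_comm μ p (Finsupp.single k 1)]
      have hB2 := bK_B2 (K := K) μ p k
      linear_combination
        (MvPowerSeries.coeff (μ + Finsupp.single k 1 + p) (V * Hp H p)) * hB2
    · rw [pd_Hp, Finset.mul_sum, map_sum, Finset.mul_sum]
      apply Finset.sum_congr rfl
      intro j _
      rw [mul_smul_comm, map_nsmul, nsmul_eq_mul]
      have h2 : V * (pd k (H j) * Hp H (p - Finsupp.single j 1))
          = (pd k (H j) * V) * Hp H (p - Finsupp.single j 1) := by ring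
      rw [h2]
      push_cast
      ring
  rw [Finset.sum_congr rfl hsum, Finset.sum_sub_distrib]
  congr 1
  · rw [← Finset.mul_sum, coeff_pd,
      TT_apply H hH V (μ + Finsupp.single k 1) (dgF μ + 1)
        (by rw [dgF_add, dgF_single])]
  · rw [Finset.sum_comm, map_sum]
    apply Finset.sum_congr rfl
    intro j _
    have e1 : ∑ p ∈ bnd (dgF μ + 1), (p j : K)
          * (bK μ p * MvPowerSeries.coeff (μ + p)
              ((pd k (H j) * V) * Hp H (p - Finsupp.single j 1)))
        = ∑ p ∈ (bnd (dgF μ + 1)).filter (fun q : Fin n →₀ ℕ => q j ≠ 0), (p j : K)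
            * (bK μ p * MvPowerSeries.coeff (μ + p)
                ((pd k (H j) * V) * Hp H (p - Finsupp.single j 1))) := by
      symm
      apply Finset.sum_filter_of_ne
      intro p _ hne h0
      rw [h0, Nat.cast_zero, zero_mul] at hne
      exact hne rfl
    rw [e1, ← sum_bnd_shift (dgF μ) j
      (fun q => (q j : K) * (bK μ q * MvPowerSeries.coeff (μ + q)
        ((pd k (H j) * V) * Hp H (q - Finsupp.single j 1))))]
    have e2 : ∀ q ∈ bnd (dgF μ),
        ((q + Finsupp.single j 1 : Fin n →₀ ℕ) j : K)
            * (bK μ (q + Finsupp.single j 1)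
              * MvPowerSeries.coeff (μ + (q + Finsupp.single j 1))
                ((pd k (H j) * V) * Hp H (q + Finsupp.single j 1 - Finsupp.single j 1)))
        = ((μ j + 1 : ℕ) : K)
            * (bK (μ + Finsupp.single j 1) q
              * MvPowerSeries.coeff (μ + Finsupp.single j 1 + q)
                ((pd k (H j) * V) * Hp H q)) := by
      intro q _
      rw [coord_add_same, add_sub_single]
      have hidx : μ + (q + Finsupp.single j 1) = μ + Finsupp.single j 1 + q := by
        rw [← add_assoc, add_right_comm]
      rw [hidx]
      have hB3 := bK_B3 (K := K) μ q j
      push_cast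
      push_cast at hB3
      linear_combination
        (MvPowerSeries.coeff (μ + Finsupp.single j 1 + q) ((pd k (H j) * V) * Hp H q)) * hB3
    rw [Finset.sum_congr rfl e2, ← Finset.mul_sum, coeff_pd,
      TT_apply H hH _ (μ + Finsupp.single j 1) (dgF μ + 1)
        (by rw [dgF_add, dgF_single])]
    congr 1
    apply Finset.sum_subset (bnd_mono (by omega))
    intro q _ hq
    rw [mem_bnd] at hq
    have hvan : MvPowerSeries.coeff (μ + Finsupp.single j 1 + q) ((pd k (H j) * V) * Hp H q) = 0 := by
      apply vanishW H hH (ordGe_mul (ordGe_pdH H hH k j) (ordGe_zero V))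
      rw [dgF_add, dgF_add, dgF_single]
      omega
    rw [hvan, mul_zero]

end TTpd

section Det

lemma pd_sign_smul (k : Fin n) (u : ℤˣ) (f : MvPowerSeries (Fin n) K) :
    pd k (u • f) = u • pd k f := by
  rw [Units.smul_def, Units.smul_def, pd_zsmul]

variable (H : Fin n → MvPowerSeries (Fin n) K)

/-- the Jacobian matrix `(∂_a F_b)` -/
def BM : Matrix (Fin n) (Fin n) (MvPowerSeries (Fin n) K) :=
  Matrix.of fun a b => pd a (Fs H b)

/-- the cofactor-type matrix: `C k l = ∑_{σ l = k} sgn σ ∏_{r ≠ l} ∂_{σ r} F_r` -/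
def cofC (k l : Fin n) : MvPowerSeries (Fin n) K :=
  ∑ σ ∈ Finset.univ.filter (fun σ : Equiv.Perm (Fin n) => σ l = k),
    Equiv.Perm.sign σ • ∏ r ∈ Finset.univ.erase l, pd (σ r) (Fs H r)

lemma jacobi (l : Fin n) : ∑ k, pd k (cofC H k l) = 0 := by
  classical
  have e1 : ∑ k, pd k (cofC H k l)
      = ∑ σ : Equiv.Perm (Fin n), Equiv.Perm.sign σ
          • pd (σ l) (∏ r ∈ Finset.univ.erase l, pd (σ r) (Fs H r)) := by
    calc ∑ k, pd k (cofC H k l)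
        = ∑ k, ∑ σ ∈ Finset.univ.filter (fun σ : Equiv.Perm (Fin n) => σ l = k),
            Equiv.Perm.sign σ • pd (σ l) (∏ r ∈ Finset.univ.erase l, pd (σ r) (Fs H r)) := by
          apply Finset.sum_congr rfl
          intro k _
          rw [cofC, pd_sum]
          apply Finset.sum_congr rfl
          intro σ hσ
          rw [Finset.mem_filter] at hσ
          rw [pd_sign_smul, hσ.2]
      _ = _ := by
          rw [Finset.sum_fiberwise_eq_sum_filter]
          rw [Finset.filter_true_of_mem (fun _ _ => Finset.mem_univ _)]
  rw [e1]
  have e2 : ∀ σ : Equiv.Perm (Fin n),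
      Equiv.Perm.sign σ • pd (σ l) (∏ r ∈ Finset.univ.erase l, pd (σ r) (Fs H r))
        = ∑ r ∈ Finset.univ.erase l, Equiv.Perm.sign σ
            • (pd (σ l) (pd (σ r) (Fs H r))
              * ∏ s ∈ (Finset.univ.erase l).erase r, pd (σ s) (Fs H s)) := by
    intro σ
    rw [pd_prod, Finset.smul_sum]
  rw [Finset.sum_congr rfl (fun σ _ => e2 σ), Finset.sum_comm]
  apply Finset.sum_eq_zero
  intro r hr
  have hrl : r ≠ l := (Finset.mem_erase.mp hr).1
  have hlr : l ≠ r := hrl.symm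
  apply Finset.sum_ninvolution (fun σ => σ * Equiv.swap l r)
  · intro σ
    have hsign : Equiv.Perm.sign (σ * Equiv.swap l r) = -Equiv.Perm.sign σ := by
      rw [Equiv.Perm.sign_mul, Equiv.Perm.sign_swap hlr, mul_neg, mul_one]
    have hl : (σ * Equiv.swap l r) l = σ r := by
      rw [Equiv.Perm.mul_apply, Equiv.swap_apply_left]
    have hr' : (σ * Equiv.swap l r) r = σ l := by
      rw [Equiv.Perm.mul_apply, Equiv.swap_apply_right]
    have hprod : ∏ s ∈ (Finset.univ.erase l).erase r, pd ((σ * Equiv.swap l r) s) (Fs H s)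
        = ∏ s ∈ (Finset.univ.erase l).erase r, pd (σ s) (Fs H s) := by
      apply Finset.prod_congr rfl
      intro s hs
      have hs1 : s ≠ r := (Finset.mem_erase.mp hs).1
      have hs2 : s ≠ l := (Finset.mem_erase.mp (Finset.mem_of_mem_erase hs)).1
      rw [Equiv.Perm.mul_apply, Equiv.swap_apply_of_ne_of_ne hs2 hs1]
    rw [hsign, hl, hr', hprod, pd_comm]
    rw [Units.smul_def, Units.smul_def, Units.val_neg, neg_zsmul]
    exact add_neg_cancel _
  · intro σ _ h
    have h1 : Equiv.swap l r = 1 := mul_left_cancel (a := σ) (by rw [mul_one]; exact h)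
    have h2 : r = l := by
      have := congrArg (fun e : Equiv.Perm (Fin n) => e l) h1
      simpa [Equiv.swap_apply_left] using this
    exact hrl h2
  · intro σ
    exact Finset.mem_univ _
  · intro σ
    rw [mul_assoc, Equiv.swap_mul_self, mul_one]

lemma cramer_cof (hdet : (BM H).det = 1) (j l : Fin n) :
    ∑ k, pd k (Fs H j) * cofC H k l = if j = l then 1 else 0 := by
  classical
  have e1 : ∑ k, pd k (Fs H j) * cofC H k l
      = ∑ σ : Equiv.Perm (Fin n), Equiv.Perm.sign σ
          • (pd (σ l) (Fs H j) * ∏ r ∈ Finset.univ.erase l, pd (σ r) (Fs H r)) := by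
    calc ∑ k, pd k (Fs H j) * cofC H k l
        = ∑ k, ∑ σ ∈ Finset.univ.filter (fun σ : Equiv.Perm (Fin n) => σ l = k),
            Equiv.Perm.sign σ
              • (pd (σ l) (Fs H j) * ∏ r ∈ Finset.univ.erase l, pd (σ r) (Fs H r)) := by
          apply Finset.sum_congr rfl
          intro k _
          rw [cofC, Finset.mul_sum]
          apply Finset.sum_congr rfl
          intro σ hσ
          rw [Finset.mem_filter] at hσ
          rw [Units.smul_def, Units.smul_def, mul_smul_comm, hσ.2]
      _ = _ := by
          rw [Finset.sum_fiberwise_eq_sum_filter]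
          rw [Finset.filter_true_of_mem (fun _ _ => Finset.mem_univ _)]
  have e2 : ∑ σ : Equiv.Perm (Fin n), Equiv.Perm.sign σ
        • (pd (σ l) (Fs H j) * ∏ r ∈ Finset.univ.erase l, pd (σ r) (Fs H r))
      = (Matrix.updateCol (BM H) l (fun a => pd a (Fs H j))).det := by
    rw [Matrix.det_apply]
    apply Finset.sum_congr rfl
    intro σ _
    congr 1
    rw [← Finset.mul_prod_erase Finset.univ _ (Finset.mem_univ l)]
    congr 1
    · rw [Matrix.updateCol_self]
    · apply Finset.prod_congr rfl
      intro i hi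
      rw [Matrix.updateCol_ne (Finset.mem_erase.mp hi).1]
      rfl
  rw [e1, e2]
  rcases eq_or_ne j l with rfl | hjl
  · rw [if_pos rfl]
    have : (fun a => pd a (Fs H j)) = fun a => BM H a j := rfl
    rw [this, Matrix.updateCol_eq_self, hdet]
  · rw [if_neg hjl]
    apply Matrix.det_zero_of_column_eq (Ne.symm hjl)
    intro k
    rw [Matrix.updateCol_self, Matrix.updateCol_ne hjl]
    rfl

end Det

section Crux

variable (H : Fin n → MvPowerSeries (Fin n) K)

lemma X_mul_eq_zero {m : Fin n} {A : MvPowerSeries (Fin n) K}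
    (h : MvPowerSeries.X m * A = 0) : A = 0 := by
  ext ν
  have h2 := congrArg (MvPowerSeries.coeff (ν + Finsupp.single m 1)) h
  rw [coeff_X_mul, if_pos le_add_self, add_sub_single, map_zero] at h2
  rw [h2, map_zero]

lemma pd_TT_one (hH : GoodH H) (hdet : (BM H).det = 1) (m : Fin n) :
    pd m (TT H 1) = 0 := by
  apply X_mul_eq_zero (m := m)
  have hA : ∑ k, TT H (pd k (cofC H k m * Fs H m)) = TT H 1 := by
    rw [← TT_sum]
    apply congrArg (TT H)
    calc ∑ k, pd k (cofC H k m * Fs H m)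
        = (∑ k, pd k (cofC H k m)) * Fs H m + ∑ k, pd k (Fs H m) * cofC H k m := by
          rw [Finset.sum_mul, ← Finset.sum_add_distrib]
          apply Finset.sum_congr rfl
          intro k _
          rw [pd_mul, mul_comm (cofC H k m) (pd k (Fs H m))]
      _ = 1 := by
          rw [jacobi, cramer_cof H hdet m m, if_pos rfl, zero_mul, zero_add]
  have hM : ∀ j, (∑ k, pd k (H j) * cofC H k m)
      = cofC H j m - (if j = m then 1 else 0) := by
    intro j
    have hHj : ∀ k, pd k (H j)
        = (if k = j then (1 : MvPowerSeries (Fin n) K) else 0) - pd k (Fs H j) := by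
      intro k
      have h1 : H j = MvPowerSeries.X j - Fs H j := by rw [Fs]; ring
      conv_lhs => rw [h1]
      rw [pd_sub, pd_X]
    calc ∑ k, pd k (H j) * cofC H k m
        = ∑ k, ((if k = j then (1 : MvPowerSeries (Fin n) K) else 0) * cofC H k m
            - pd k (Fs H j) * cofC H k m) := by
          apply Finset.sum_congr rfl
          intro k _
          rw [hHj k, sub_mul]
      _ = (∑ k, (if k = j then (1 : MvPowerSeries (Fin n) K) else 0) * cofC H k m)
            - ∑ k, pd k (Fs H j) * cofC H k m := Finset.sum_sub_distrib _ _
      _ = cofC H j m - (if j = m then 1 else 0) := by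
          rw [cramer_cof H hdet j m]
          congr 1
          have : ∀ k, (if k = j then (1 : MvPowerSeries (Fin n) K) else 0) * cofC H k m
              = if k = j then cofC H k m else 0 := by
            intro k
            split <;> simp
          rw [Finset.sum_congr rfl (fun k _ => this k)]
          rw [Finset.sum_ite_eq' Finset.univ j (fun k => cofC H k m), if_pos (Finset.mem_univ j)]
  have hB : ∑ k, TT H (pd k (cofC H k m * Fs H m))
      = ∑ k, pd k (TT H (cofC H k m * Fs H m))
        - (∑ j, pd j (TT H (cofC H j m * Fs H m)) - pd m (TT H (Fs H m))) := by
    calc ∑ k, TT H (pd k (cofC H k m * Fs H m))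
        = ∑ k, (pd k (TT H (cofC H k m * Fs H m))
            - ∑ j, pd j (TT H (pd k (H j) * (cofC H k m * Fs H m)))) := by
          apply Finset.sum_congr rfl
          intro k _
          exact TT_pd H hH k _
      _ = ∑ k, pd k (TT H (cofC H k m * Fs H m))
            - ∑ k, ∑ j, pd j (TT H (pd k (H j) * (cofC H k m * Fs H m))) :=
          Finset.sum_sub_distrib _ _
      _ = _ := by
          congr 1
          rw [Finset.sum_comm]
          calc ∑ j, ∑ k, pd j (TT H (pd k (H j) * (cofC H k m * Fs H m)))
              = ∑ j, pd j (TT H ((∑ k, pd k (H j) * cofC H k m) * Fs H m)) := by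
                apply Finset.sum_congr rfl
                intro j _
                rw [Finset.sum_mul, TT_sum, pd_sum]
                apply Finset.sum_congr rfl
                intro k _
                rw [mul_assoc]
            _ = ∑ j, pd j (TT H ((cofC H j m - (if j = m then 1 else 0)) * Fs H m)) := by
                apply Finset.sum_congr rfl
                intro j _
                rw [hM j]
            _ = ∑ j, pd j (TT H (cofC H j m * Fs H m)) - pd m (TT H (Fs H m)) := by
                have hterm : ∀ j : Fin n,
                    pd j (TT H ((cofC H j m - (if j = m then 1 else 0)) * Fs H m))
                      = pd j (TT H (cofC H j m * Fs H m))
                        - (if j = m then pd j (TT H (Fs H m)) else 0) := by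
                  intro j
                  rw [sub_mul, TT_sub, pd_sub]
                  congr 1
                  rcases eq_or_ne j m with rfl | hjm
                  · rw [if_pos rfl, if_pos rfl, one_mul]
                  · rw [if_neg hjm, if_neg hjm, zero_mul, TT_zero, pd_zero]
                rw [Finset.sum_congr rfl (fun j _ => hterm j), Finset.sum_sub_distrib]
                congr 1
                rw [Finset.sum_ite_eq' Finset.univ m (fun j => pd j (TT H (Fs H m))),
                  if_pos (Finset.mem_univ m)]
  have hFsm : TT H (Fs H m) = MvPowerSeries.X m * TT H 1 := by
    have h := TT_Fmul H hH m 1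
    rw [mul_one] at h
    exact h
  have hcomb : TT H 1 = pd m (TT H (Fs H m)) := by
    rw [← hA, hB]
    ring
  rw [hFsm, pd_mul, pd_X, if_pos rfl, one_mul] at hcomb
  exact ((left_eq_add).mp hcomb).symm ▸ rfl

lemma TT_one (hH : GoodH H) (hdet : (BM H).det = 1) : TT H 1 = 1 := by
  have hpd := pd_TT_one H hH hdet
  ext ν
  rcases eq_or_ne ν 0 with rfl | hν
  · rw [MvPowerSeries.coeff_one, if_pos rfl, coeff_TT]
    have hb : bnd (n := n) (dgF (0 : Fin n →₀ ℕ)) = {0} := by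
      ext p
      rw [dgF_zero, bnd_zero_mem, Finset.mem_singleton]
    rw [hb, Finset.sum_singleton, bK_zero_right, Hp_zero, add_zero, mul_one, one_mul]
    rw [MvPowerSeries.coeff_one, if_pos rfl]
  · rw [MvPowerSeries.coeff_one, if_neg hν]
    obtain ⟨m, hm⟩ : ∃ m, ν m ≠ 0 := by
      by_contra hc
      push_neg at hc
      exact hν (Finsupp.ext fun a => hc a)
    have h0 := congrArg (MvPowerSeries.coeff (ν - Finsupp.single m 1)) (hpd m)
    rw [coeff_pd, map_zero, sub_add_single _ _ hm] at h0
    have hfac : ((ν - Finsupp.single m 1 : Fin n →₀ ℕ) : Fin n → ℕ) m + 1 = ν m := by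
      rw [coord_sub_same]
      omega
    rw [hfac] at h0
    rcases mul_eq_zero.mp h0 with h | h
    · exact absurd h (by exact_mod_cast hm)
    · exact h

end Crux

section Key

variable (H : Fin n → MvPowerSeries (Fin n) K)

lemma TT_Fm (hH : GoodH H) (hdet : (BM H).det = 1) :
    ∀ (N : ℕ) (m : Fin n →₀ ℕ), dgF m = N →
      TT H (Fm H m) = (fun ρ => if ρ = m then (1 : K) else 0) := by
  intro N
  induction N using Nat.strong_induction_on with
  | _ N ih =>
    intro m hm
    rcases eq_or_ne m 0 with rfl | hm0
    · rw [Fm_zero, TT_one H hH hdet]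
      ext ρ
      rw [MvPowerSeries.coeff_one]; rfl
    · obtain ⟨i, hi⟩ : ∃ i, m i ≠ 0 := by
        by_contra hc
        push_neg at hc
        exact hm0 (Finsupp.ext fun a => hc a)
      have hN : 1 ≤ N := by
        have h1 := coord_le_dgF m i
        omega
      have hrec := ih (N - 1) (by omega) (m - Finsupp.single i 1)
        (by rw [dgF_sub_single _ _ hi, hm])
      rw [Fm_sub_single H m i hi, TT_Fmul H hH i _, hrec]
      ext ρ
      erw [coeff_X_mul, MvPowerSeries.coeff_apply]
      by_cases hρ : Finsupp.single i 1 ≤ ρ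
      · erw [if_pos hρ, MvPowerSeries.coeff_apply]
        have hiff : (ρ - Finsupp.single i 1 = m - Finsupp.single i 1) ↔ (ρ = m) := by
          constructor
          · intro h
            have h1 := congrArg (fun t : Fin n →₀ ℕ => t + Finsupp.single i 1) h
            rwa [sub_add_single _ _ (by rw [Finsupp.single_le_iff] at hρ; omega),
              sub_add_single _ _ hi] at h1
          · intro h
            rw [h]
        rw [if_congr hiff rfl rfl]
      · rw [if_neg hρ]
        have hne : ρ ≠ m := by
          rintro rfl
          apply hρ
          rw [Finsupp.single_le_iff]
          omega
        erw [MvPowerSeries.coeff_apply, if_neg hne]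

lemma substF_coeff (hH : GoodH H) (U : MvPowerSeries (Fin n) K) (α : Fin n →₀ ℕ)
    (D : ℕ) (hD : dgF α ≤ D) :
    MvPowerSeries.coeff α (substF (fun j => MvPowerSeries.X j - H j) U)
      = ∑ s ∈ bnd D, MvPowerSeries.coeff s U * MvPowerSeries.coeff α (Fm H s) := by
  rw [MvPowerSeries.coeff_apply]
  show ∑ᶠ (p : Fin n → ℕ),
      MvPowerSeries.coeff (Finsupp.equivFunOnFinite.symm p) U
        * MvPowerSeries.coeff α (∏ i, (MvPowerSeries.X i - H i) ^ p i) = _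
  have hcomp : ∀ p : Fin n → ℕ,
      MvPowerSeries.coeff (Finsupp.equivFunOnFinite.symm p) U
          * MvPowerSeries.coeff α (∏ i, (MvPowerSeries.X i - H i) ^ p i)
        = (fun s : Fin n →₀ ℕ =>
            MvPowerSeries.coeff s U * MvPowerSeries.coeff α (Fm H s))
            (Finsupp.equivFunOnFinite.symm p) := by
    intro p
    rfl
  rw [finsum_congr hcomp,
    finsum_comp_equiv (Finsupp.equivFunOnFinite.symm : (Fin n → ℕ) ≃ (Fin n →₀ ℕ))
      (f := fun s : Fin n →₀ ℕ =>
        MvPowerSeries.coeff s U * MvPowerSeries.coeff α (Fm H s))]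
  apply finsum_eq_sum_of_support_subset
  intro s hs
  rw [Function.mem_support] at hs
  have hsD : dgF s ≤ D := by
    by_contra hcon
    apply hs
    rw [ordGe_Fm H hH s α (by omega), mul_zero]
  rw [Finset.mem_coe, mem_bnd]
  exact hsD

lemma TT_subst (hH : GoodH H) (hdet : (BM H).det = 1) (U : MvPowerSeries (Fin n) K) :
    TT H (substF (fun j => MvPowerSeries.X j - H j) U) = U := by
  ext μ
  rw [coeff_TT]
  classical
  have e1 : ∀ p ∈ bnd (dgF μ),
      bK μ p * MvPowerSeries.coeff (μ + p)
          (substF (fun j => MvPowerSeries.X j - H j) U * Hp H p)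
        = ∑ s ∈ bnd (2 * dgF μ), MvPowerSeries.coeff s U
            * (bK μ p * MvPowerSeries.coeff (μ + p) (Fm H s * Hp H p)) := by
    intro p hp
    rw [mem_bnd] at hp
    rw [MvPowerSeries.coeff_mul]
    have e2 : ∀ y ∈ Finset.HasAntidiagonal.antidiagonal (μ + p),
        MvPowerSeries.coeff y.1 (substF (fun j => MvPowerSeries.X j - H j) U)
            * MvPowerSeries.coeff y.2 (Hp H p)
          = ∑ s ∈ bnd (2 * dgF μ), MvPowerSeries.coeff s U
              * (MvPowerSeries.coeff y.1 (Fm H s) * MvPowerSeries.coeff y.2 (Hp H p)) := by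
      rintro ⟨y1, y2⟩ hy
      rw [Finset.HasAntidiagonal.mem_antidiagonal] at hy
      have hy1 : dgF y1 ≤ 2 * dgF μ := by
        have := dgF_add y1 y2
        rw [hy, dgF_add] at this
        omega
      rw [substF_coeff H hH U y1 (2 * dgF μ) hy1, Finset.sum_mul]
      apply Finset.sum_congr rfl
      intro s _
      ring
    rw [Finset.sum_congr rfl e2, Finset.sum_comm, Finset.mul_sum]
    apply Finset.sum_congr rfl
    intro s _
    rw [MvPowerSeries.coeff_mul, Finset.mul_sum, Finset.mul_sum, Finset.mul_sum]
    apply Finset.sum_congr rfl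
    intro y _
    ring
  rw [Finset.sum_congr rfl e1, Finset.sum_comm]
  have e3 : ∀ s ∈ bnd (2 * dgF μ),
      ∑ p ∈ bnd (dgF μ), MvPowerSeries.coeff s U
          * (bK μ p * MvPowerSeries.coeff (μ + p) (Fm H s * Hp H p))
        = MvPowerSeries.coeff s U * (if μ = s then 1 else 0) := by
    intro s _
    rw [← Finset.mul_sum]
    congr 1
    have := TT_Fm H hH hdet (dgF s) s rfl
    have hTT := congrArg (MvPowerSeries.coeff μ) this
    rw [coeff_TT] at hTT
    exact hTT
  rw [Finset.sum_congr rfl e3]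
  have e4 : ∀ s ∈ bnd (2 * dgF μ),
      MvPowerSeries.coeff s U * (if μ = s then 1 else 0)
        = if s = μ then MvPowerSeries.coeff s U else 0 := by
    intro s _
    rcases eq_or_ne s μ with rfl | hs
    · rw [if_pos rfl, if_pos rfl, mul_one]
    · rw [if_neg hs, if_neg (Ne.symm hs), mul_zero]
  rw [Finset.sum_congr rfl e4, Finset.sum_ite_eq' (bnd (2 * dgF μ)) μ
    (fun s => MvPowerSeries.coeff s U), if_pos]
  rw [mem_bnd]
  omega

end Key

section Final

lemma fact_ratio (x y : ℕ) :
    (x + y).factorial / x.factorial = (x + y).choose y * y.factorial := by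
  have h := Nat.choose_mul_factorial_mul_factorial (Nat.le_add_left y x)
  have h2 : x + y - y = x := by omega
  rw [h2] at h
  exact Nat.div_eq_of_eq_mul_left (Nat.factorial_pos x) (by rw [← h])

variable (H : Fin n → MvPowerSeries (Fin n) K)

lemma term_eq (W : MvPowerSeries (Fin n) K) (μ : Fin n →₀ ℕ) (p : Fin n → ℕ) :
    (∏ a, (((p a).factorial : K)))⁻¹
        * MvPowerSeries.coeff μ (Dmulti p (W * ∏ a, (H a) ^ (p a)))
      = bK μ (Finsupp.equivFunOnFinite.symm p)
          * MvPowerSeries.coeff (μ + Finsupp.equivFunOnFinite.symm p)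
              (W * Hp H (Finsupp.equivFunOnFinite.symm p)) := by
  set q := Finsupp.equivFunOnFinite.symm p with hq
  show (∏ a, (((q a).factorial : K)))⁻¹
      * ((∏ i, (((μ i + q i).factorial / (μ i).factorial : ℕ) : K))
        * MvPowerSeries.coeff (μ + q) (W * Hp H q))
    = bK μ q * MvPowerSeries.coeff (μ + q) (W * Hp H q)
  have hfac : ∀ i ∈ Finset.univ,
      (((μ i + q i).factorial / (μ i).factorial : ℕ) : K)
        = (((μ i + q i).choose (q i) * (q i).factorial : ℕ) : K) := by
    intro i _
    rw [fact_ratio]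
  rw [Finset.prod_congr rfl hfac]
  unfold bK
  have hcast : ∀ i ∈ Finset.univ,
      (((μ i + q i).choose (q i) * (q i).factorial : ℕ) : K)
        = ((μ i + q i).choose (q i) : K) * ((q i).factorial : K) := by
    intro i _
    push_cast
    ring
  rw [Finset.prod_congr rfl hcast, Finset.prod_mul_distrib]
  have hne : (∏ a, (((q a).factorial : K))) ≠ 0 :=
    Finset.prod_ne_zero_iff.mpr fun a _ => Nat.cast_ne_zero.mpr (Nat.factorial_ne_zero _)
  field_simp

lemma abhyankar_main
    (hH : GoodH H)
    (hjac : Matrix.det (Matrix.of fun a b =>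
      pd a (MvPowerSeries.X b - H b)) = (1 : MvPowerSeries (Fin n) K))
    (U : MvPowerSeries (Fin n) K) :
    U = fun μ => ∑ᶠ (p : Fin n → ℕ),
      (∏ a, (((p a).factorial : K)))⁻¹ *
        MvPowerSeries.coeff μ
          (Dmulti p (substF (fun j => MvPowerSeries.X j - H j) U * ∏ a, (H a) ^ (p a))) := by
  have hdet : (BM H).det = 1 := hjac
  funext μ
  set W := substF (fun j => MvPowerSeries.X j - H j) U with hW
  have h1 : ∑ᶠ (p : Fin n → ℕ),
      (∏ a, (((p a).factorial : K)))⁻¹ *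
        MvPowerSeries.coeff μ (Dmulti p (W * ∏ a, (H a) ^ (p a)))
      = ∑ᶠ (p : Fin n → ℕ),
          (fun s : Fin n →₀ ℕ =>
            bK μ s * MvPowerSeries.coeff (μ + s) (W * Hp H s))
            (Finsupp.equivFunOnFinite.symm p) :=
    finsum_congr (fun p => term_eq H W μ p)
  rw [h1, finsum_comp_equiv (Finsupp.equivFunOnFinite.symm : (Fin n → ℕ) ≃ (Fin n →₀ ℕ))
    (f := fun s : Fin n →₀ ℕ => bK μ s * MvPowerSeries.coeff (μ + s) (W * Hp H s))]
  have h2 : ∑ᶠ (s : Fin n →₀ ℕ), bK μ s * MvPowerSeries.coeff (μ + s) (W * Hp H s)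
      = ∑ s ∈ bnd (dgF μ), bK μ s * MvPowerSeries.coeff (μ + s) (W * Hp H s) := by
    apply finsum_eq_sum_of_support_subset
    intro s hs
    rw [Function.mem_support] at hs
    rw [Finset.mem_coe, mem_bnd]
    by_contra hcon
    apply hs
    rw [vanish0 H hH W _ _ (by rw [dgF_add]; omega), mul_zero]
  rw [h2, ← coeff_TT, hW, TT_subst H hH hdet U, MvPowerSeries.coeff_apply]

end Final

end Abhy

/-- **general Abhyankar formula.** If `Fᵢ = xᵢ − Hᵢ` with `Hᵢ`
of order ≥ 2 and `j(F) = 1`, then for every `U ∈ K[[x₁,…,xₙ]]`,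
`U = Σ_{p∈ℕⁿ} ∂^p (U(F) · H^p) / p!` (the sum converging m-adically, i.e.
computed coefficientwise). -/
theorem abhyankar_general
    (H : Fin n → MvPowerSeries (Fin n) K)
    (hH : ∀ i (μ : Fin n →₀ ℕ), dgF μ < 2 → MvPowerSeries.coeff μ (H i) = 0)
    (hjac : Matrix.det (Matrix.of fun a b =>
      pd a (MvPowerSeries.X b - H b)) = (1 : MvPowerSeries (Fin n) K)) :
    ∀ U : MvPowerSeries (Fin n) K, U = fun μ => ∑ᶠ (p : Fin n → ℕ),
      (∏ a, (((p a).factorial : K)))⁻¹ *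
        MvPowerSeries.coeff μ
          (Dmulti p (substF (fun j => MvPowerSeries.X j - H j) U * ∏ a, (H a) ^ (p a))) := by
  intro U
  exact Abhy.abhyankar_main H hH hjac U

end
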